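/- Let g be a standard Gaussian and H(β) = e^{−β²/2} E[cosh(βg) log cosh(βg)]. Then H is continuous, strictly increasing on [0,∞), H(0) = 0, and H(β) → ∞ as β → ∞; consequently there is a unique β_cr > 0 with H(β_cr) = log 2, and H(β) ≤ log 2 iff β ≤ β_cr. -/

import Mathlib

open MeasureTheory ProbabilityTheory Filter Set Real
open scoped NNReal ENNReal


lemma gconv (f : ℝ → ℝ) :
    ∫ x, f x ∂(gaussianReal 0 1) = ∫ x, gaussianPDFReal 0 1 x * f x := by
  rw [gaussianReal_of_var_ne_zero _ one_ne_zero]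
  have h : gaussianPDF 0 1 = fun x => ((Real.toNNReal (gaussianPDFReal 0 1 x) : ℝ≥0) : ℝ≥0∞) := by
    funext x
    simp [gaussianPDF, ENNReal.ofReal]
  rw [h, integral_withDensity_eq_integral_smul]
  · congr 1
    funext x
    simp [NNReal.smul_def, Real.coe_toNNReal _ (gaussianPDFReal_nonneg 0 1 x)]
  · exact (measurable_gaussianPDFReal 0 1).real_toNNReal

-- Integrability transfer: Lebesgue → gaussian
lemma gint {f : ℝ → ℝ} (hf : Integrable (fun x => gaussianPDFReal 0 1 x * f x) volume) :
    Integrable f (gaussianReal 0 1) := by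
  rw [gaussianReal_of_var_ne_zero _ one_ne_zero]
  have h : gaussianPDF 0 1 = fun x => ((Real.toNNReal (gaussianPDFReal 0 1 x) : ℝ≥0) : ℝ≥0∞) := by
    funext x; simp [gaussianPDF, ENNReal.ofReal]
  rw [h]
  apply (integrable_withDensity_iff_integrable_smul
    ((measurable_gaussianPDFReal 0 1).real_toNNReal)).2
  convert hf using 2 with x
  · rfl
  simp [NNReal.smul_def, Real.coe_toNNReal _ (gaussianPDFReal_nonneg 0 1 x)]

lemma pdf_le (x : ℝ) : gaussianPDFReal 0 1 x ≤ Real.exp (-x^2/2) := by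
  rw [gaussianPDFReal]
  push_cast
  rw [mul_one, sub_zero]
  have h1 : (1:ℝ) ≤ Real.sqrt (2 * π) := by
    rw [show (1:ℝ) = Real.sqrt 1 by simp]
    exact Real.sqrt_le_sqrt (by nlinarith [Real.pi_gt_three])
  calc (Real.sqrt (2*π))⁻¹ * Real.exp (-x^2/(2*1)) ≤ 1 * Real.exp (-x^2/(2*1)) := by
        apply mul_le_mul_of_nonneg_right _ (Real.exp_nonneg _)
        exact inv_le_one_of_one_le₀ h1
    _ = Real.exp (-x^2/2) := by norm_num

-- master Lebesgue integrability
lemma masterL (c : ℝ) :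
    Integrable (fun x => gaussianPDFReal 0 1 x * Real.exp (c * |x|)) volume := by
  have hint : Integrable (fun x : ℝ => Real.exp (2*c^2) * Real.exp (-(1/4) * x^2)) volume :=
    (integrable_exp_neg_mul_sq (by norm_num)).const_mul _
  apply hint.mono'
  · exact ((stronglyMeasurable_gaussianPDFReal 0 1).measurable.aestronglyMeasurable.mul
      ((continuous_exp.comp (continuous_const.mul continuous_abs)).aestronglyMeasurable))
  · filter_upwards with x
    have h0 : (0:ℝ) ≤ gaussianPDFReal 0 1 x * Real.exp (c * |x|) :=
      mul_nonneg (gaussianPDFReal_nonneg 0 1 x) (Real.exp_nonneg _)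
    rw [Real.norm_of_nonneg h0]
    calc gaussianPDFReal 0 1 x * Real.exp (c * |x|)
        ≤ Real.exp (-x^2/2) * Real.exp (c * |x|) :=
          mul_le_mul_of_nonneg_right (pdf_le x) (Real.exp_nonneg _)
      _ = Real.exp (-x^2/2 + c * |x|) := (Real.exp_add _ _).symm
      _ ≤ Real.exp (2*c^2) * Real.exp (-(1/4) * x^2) := by
          rw [← Real.exp_add]
          apply Real.exp_le_exp.2
          nlinarith [sq_nonneg (2*c - |x|/2), sq_abs x, sq_nonneg x]

-- integrability under the gaussian from an exponential bound
lemma gintegrable {f : ℝ → ℝ} (hf : Continuous f) (c C : ℝ)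
    (h : ∀ x, |f x| ≤ C * Real.exp (c * |x|)) : Integrable f (gaussianReal 0 1) := by
  apply gint
  apply (masterL c).const_mul C |>.mono'
  · exact ((stronglyMeasurable_gaussianPDFReal 0 1).measurable.aestronglyMeasurable.mul
      hf.aestronglyMeasurable)
  · filter_upwards with x
    rw [Real.norm_eq_abs, abs_mul, abs_of_nonneg (gaussianPDFReal_nonneg 0 1 x)]
    calc gaussianPDFReal 0 1 x * |f x| ≤ gaussianPDFReal 0 1 x * (C * Real.exp (c * |x|)) :=
          mul_le_mul_of_nonneg_left (h x) (gaussianPDFReal_nonneg 0 1 x)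
      _ = C * (gaussianPDFReal 0 1 x * Real.exp (c * |x|)) := by ring

-- mgf of the standard gaussian
lemma gmgf (t : ℝ) : ∫ x, Real.exp (t * x) ∂(gaussianReal 0 1) = Real.exp (t^2/2) := by
  rw [gconv]
  have key : ∀ x : ℝ, gaussianPDFReal 0 1 x * Real.exp (t * x)
      = Real.exp (t^2/2) * ((Real.sqrt (2*π))⁻¹ * Real.exp (-(1/2) * (x - t)^2)) := by
    intro x
    rw [gaussianPDFReal]
    push_cast
    rw [sub_zero, mul_one, mul_assoc, ← Real.exp_add,
      show Real.exp (t^2/2) * ((Real.sqrt (2*π))⁻¹ * Real.exp (-(1/2)*(x-t)^2))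
        = (Real.sqrt (2*π))⁻¹ * Real.exp (t^2/2 + -(1/2)*(x-t)^2) by rw [Real.exp_add]; ring]
    congr 1
    ring
  simp_rw [key]
  rw [integral_const_mul, integral_const_mul]
  have : ∫ x : ℝ, Real.exp (-(1/2) * (x - t)^2) = Real.sqrt (2*π) := by
    rw [integral_sub_right_eq_self (μ := volume) (fun x => Real.exp (-(1/2) * x^2)) t, integral_gaussian]
    rw [show π / (1/2) = 2 * π by ring]
  rw [this, inv_mul_cancel₀ (by positivity), mul_one]

lemma integrable_exp_mul (t : ℝ) :
    Integrable (fun x => Real.exp (t * x)) (gaussianReal 0 1) := by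
  apply gintegrable (by continuity) |t| 1
  intro x
  rw [one_mul, abs_of_nonneg (Real.exp_nonneg _)]
  exact Real.exp_le_exp.2 (le_trans (le_abs_self _) (by rw [abs_mul]))

lemma gcosh (β : ℝ) : ∫ x, Real.cosh (β * x) ∂(gaussianReal 0 1) = Real.exp (β^2/2) := by
  simp_rw [Real.cosh_eq, show ∀ x : ℝ, -(β*x) = (-β)*x from fun x => by ring]
  rw [integral_div, integral_add (integrable_exp_mul β) (integrable_exp_mul (-β)),
    gmgf β, gmgf (-β), neg_pow]
  ring_nf

lemma cosh_le_exp_abs (y : ℝ) : Real.cosh y ≤ Real.exp |y| := by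
  rw [Real.cosh_eq]
  have h1 : Real.exp y ≤ Real.exp |y| := Real.exp_le_exp.2 (le_abs_self y)
  have h2 : Real.exp (-y) ≤ Real.exp |y| := Real.exp_le_exp.2 (neg_le_abs y)
  linarith

lemma abs_sinh_le_exp_abs (y : ℝ) : |Real.sinh y| ≤ Real.exp |y| := by
  rw [Real.abs_sinh]
  calc Real.sinh |y| ≤ Real.cosh |y| := by
        rw [Real.sinh_eq, Real.cosh_eq]
        have := Real.exp_pos (-|y|); linarith
    _ ≤ Real.exp |y| := by simpa using cosh_le_exp_abs |y|

lemma log_cosh_nonneg (y : ℝ) : 0 ≤ Real.log (Real.cosh y) :=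
  Real.log_nonneg (Real.one_le_cosh y)

lemma log_cosh_le_abs (y : ℝ) : Real.log (Real.cosh y) ≤ |y| := by
  calc Real.log (Real.cosh y) ≤ Real.log (Real.exp |y|) :=
        Real.log_le_log (Real.cosh_pos y) (cosh_le_exp_abs y)
    _ = |y| := Real.log_exp _

lemma abs_le_exp_abs (y : ℝ) : |y| ≤ Real.exp |y| :=
  le_trans (by linarith [Real.add_one_le_exp |y|]) (le_refl _)

lemma coshlog_bound (b x : ℝ) :
    |Real.cosh (b*x) * Real.log (Real.cosh (b*x))| ≤ |b| * Real.exp ((|b|+1) * |x|) := by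
  rw [abs_mul, abs_of_pos (Real.cosh_pos _), abs_of_nonneg (log_cosh_nonneg _)]
  have hc : Real.cosh (b*x) ≤ Real.exp (|b| * |x|) := by
    calc Real.cosh (b*x) ≤ Real.exp |b*x| := cosh_le_exp_abs _
      _ = Real.exp (|b| * |x|) := by rw [abs_mul]
  have hl : Real.log (Real.cosh (b*x)) ≤ |b| * Real.exp |x| := by
    calc Real.log (Real.cosh (b*x)) ≤ |b*x| := log_cosh_le_abs _
      _ = |b| * |x| := abs_mul b x
      _ ≤ |b| * Real.exp |x| := mul_le_mul_of_nonneg_left (abs_le_exp_abs x) (abs_nonneg b)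
  calc Real.cosh (b*x) * Real.log (Real.cosh (b*x))
      ≤ Real.exp (|b| * |x|) * (|b| * Real.exp |x|) :=
        mul_le_mul hc hl (log_cosh_nonneg _) (Real.exp_nonneg _)
    _ = |b| * Real.exp ((|b|+1) * |x|) := by
        rw [show (|b|+1) * |x| = |b| * |x| + |x| by ring, Real.exp_add]; ring

lemma F'_bound (b x : ℝ) :
    |x * Real.sinh (b*x) * (Real.log (Real.cosh (b*x)) + 1)|
      ≤ (|b|+1) * Real.exp ((|b|+2) * |x|) := by
  rw [abs_mul, abs_mul]
  have h1 : |x| ≤ Real.exp |x| := abs_le_exp_abs x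
  have h2 : |Real.sinh (b*x)| ≤ Real.exp (|b| * |x|) := by
    calc |Real.sinh (b*x)| ≤ Real.exp |b*x| := abs_sinh_le_exp_abs _
      _ = Real.exp (|b| * |x|) := by rw [abs_mul]
  have h3 : |Real.log (Real.cosh (b*x)) + 1| ≤ (|b|+1) * Real.exp |x| := by
    rw [abs_of_nonneg (by linarith [log_cosh_nonneg (b*x)])]
    have := log_cosh_le_abs (b*x)
    have hbx : |b*x| = |b| * |x| := abs_mul b x
    have he : (1:ℝ) ≤ Real.exp |x| := Real.one_le_exp (abs_nonneg x)
    have : Real.log (Real.cosh (b*x)) + 1 ≤ |b| * |x| + 1 := by linarith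
    calc Real.log (Real.cosh (b*x)) + 1 ≤ |b| * |x| + 1 := this
      _ ≤ |b| * Real.exp |x| + Real.exp |x| := by
          have := mul_le_mul_of_nonneg_left (abs_le_exp_abs x) (abs_nonneg b)
          linarith
      _ = (|b|+1) * Real.exp |x| := by ring
  calc |x| * |Real.sinh (b*x)| * |Real.log (Real.cosh (b*x)) + 1|
      ≤ Real.exp |x| * Real.exp (|b| * |x|) * ((|b|+1) * Real.exp |x|) := by
        apply mul_le_mul _ h3 (abs_nonneg _) _
        · exact mul_le_mul h1 h2 (abs_nonneg _) (Real.exp_nonneg _)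
        · positivity
    _ = (|b|+1) * Real.exp ((|b|+2) * |x|) := by
        rw [show (|b|+2) * |x| = |x| + |b| * |x| + |x| by ring, Real.exp_add, Real.exp_add]
        ring

lemma hasDeriv_coshlog (x b : ℝ) :
    HasDerivAt (fun t => Real.cosh (t*x) * Real.log (Real.cosh (t*x)))
      (x * Real.sinh (b*x) * (Real.log (Real.cosh (b*x)) + 1)) b := by
  have hbx : HasDerivAt (fun t : ℝ => t * x) x b := hasDerivAt_mul_const x
  have hcosh : HasDerivAt (fun t => Real.cosh (t*x)) (Real.sinh (b*x) * x) b :=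
    ((Real.hasDerivAt_cosh (b*x)).comp b hbx :)
  have hlog : HasDerivAt (fun t => Real.log (Real.cosh (t*x)))
      ((Real.cosh (b*x))⁻¹ * (Real.sinh (b*x) * x)) b :=
    ((Real.hasDerivAt_log (Real.cosh_pos (b*x)).ne').comp b hcosh :)
  have := hcosh.mul hlog
  refine this.congr_deriv ?_
  field_simp [(Real.cosh_pos (b*x)).ne']

lemma masterγ (c : ℝ) : Integrable (fun x => Real.exp (c * |x|)) (gaussianReal 0 1) := by
  apply gintegrable (continuous_exp.comp (continuous_const.mul continuous_abs)) c 1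
  intro x
  simp [abs_of_nonneg (Real.exp_nonneg _)]

lemma cont_logcosh (b : ℝ) : Continuous fun x : ℝ => Real.log (Real.cosh (b*x)) := by
  rw [continuous_iff_continuousAt]
  intro x
  have h1 : ContinuousAt Real.log (Real.cosh (b*x)) :=
    Real.continuousAt_log (Real.cosh_pos _).ne'
  have h2 : ContinuousAt (fun x : ℝ => Real.cosh (b*x)) x := by fun_prop
  exact ContinuousAt.comp (f := fun x : ℝ => Real.cosh (b*x)) h1 h2

lemma hasDeriv_G (β : ℝ) :
    Integrable (fun x => x * Real.sinh (β*x) * (Real.log (Real.cosh (β*x)) + 1))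
        (gaussianReal 0 1) ∧
    HasDerivAt (fun b => ∫ x, Real.cosh (b*x) * Real.log (Real.cosh (b*x)) ∂(gaussianReal 0 1))
      (∫ x, x * Real.sinh (β*x) * (Real.log (Real.cosh (β*x)) + 1) ∂(gaussianReal 0 1)) β := by
  have cont : ∀ b : ℝ, Continuous (fun x => Real.cosh (b*x) * Real.log (Real.cosh (b*x))) := by
    intro b
    exact (Real.continuous_cosh.comp (continuous_const.mul continuous_id)).mul (cont_logcosh b)
  apply hasDerivAt_integral_of_dominated_loc_of_deriv_le
    (F' := fun b x => x * Real.sinh (b*x) * (Real.log (Real.cosh (b*x)) + 1))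
    (bound := fun x => (|β|+2) * Real.exp ((|β|+3) * |x|)) (Metric.ball_mem_nhds β one_pos)
  · filter_upwards with b
    exact (cont b).aestronglyMeasurable
  · exact gintegrable (cont β) (|β|+1) |β| (fun x => coshlog_bound β x)
  · exact Continuous.aestronglyMeasurable
      ((continuous_id.mul (Real.continuous_sinh.comp (continuous_const.mul continuous_id))).mul
        ((cont_logcosh β).add continuous_const))
  · filter_upwards with x b hb
    have hball : |b| ≤ |β| + 1 := by
      rw [Metric.mem_ball, Real.dist_eq] at hb
      calc |b| = |(b - β) + β| := by ring_nf
        _ ≤ |b - β| + |β| := abs_add_le _ _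
        _ ≤ |β| + 1 := by linarith
    rw [Real.norm_eq_abs]
    calc |x * Real.sinh (b*x) * (Real.log (Real.cosh (b*x)) + 1)|
        ≤ (|b|+1) * Real.exp ((|b|+2) * |x|) := F'_bound b x
      _ ≤ (|β|+2) * Real.exp ((|β|+3) * |x|) := by
          apply mul_le_mul (by linarith) _ (Real.exp_nonneg _) (by positivity)
          exact Real.exp_le_exp.2 (mul_le_mul_of_nonneg_right (by linarith) (abs_nonneg x))
  · exact (masterγ (|β|+3)).const_mul _
  · filter_upwards with x b _
    exact hasDeriv_coshlog x b

lemma pdf_eq : gaussianPDFReal 0 1 = fun y => (Real.sqrt (2*π))⁻¹ * Real.exp (-(y^2/2)) := by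
  funext y
  rw [gaussianPDFReal]
  push_cast
  rw [mul_one, sub_zero]
  norm_num
  left
  ring

lemma hasDeriv_pdf (x : ℝ) :
    HasDerivAt (gaussianPDFReal 0 1) (-x * gaussianPDFReal 0 1 x) x := by
  simp only [pdf_eq]
  have h1 : HasDerivAt (fun y : ℝ => -(y^2/2)) (-x) x := by
    have := ((hasDerivAt_pow 2 x).div_const 2).neg
    refine this.congr_deriv ?_
    ring
  have h2 := (h1.exp).const_mul (Real.sqrt (2*π))⁻¹
  refine h2.congr_deriv ?_
  ring

lemma hasDeriv_f (β x : ℝ) :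
    HasDerivAt (fun y => Real.sinh (β*y) * (Real.log (Real.cosh (β*y)) + 1))
      (β * (Real.cosh (β*x) * (Real.log (Real.cosh (β*x)) + 1)
          + Real.sinh (β*x)^2 / Real.cosh (β*x))) x := by
  have hby : HasDerivAt (fun y : ℝ => β * y) β x := by
    simpa using (hasDerivAt_id x).const_mul β
  have hsinh : HasDerivAt (fun y => Real.sinh (β*y)) (Real.cosh (β*x) * β) x :=
    (Real.hasDerivAt_sinh (β*x)).comp x hby
  have hcosh : HasDerivAt (fun y => Real.cosh (β*y)) (Real.sinh (β*x) * β) x :=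
    (Real.hasDerivAt_cosh (β*x)).comp x hby
  have hlog : HasDerivAt (fun y => Real.log (Real.cosh (β*y)) + 1)
      ((Real.cosh (β*x))⁻¹ * (Real.sinh (β*x) * β)) x :=
    (((Real.hasDerivAt_log (Real.cosh_pos (β*x)).ne').comp x hcosh :).add_const 1)
  have := hsinh.mul hlog
  refine this.congr_deriv ?_
  field_simp [(Real.cosh_pos (β*x)).ne']

lemma logcosh1_bound (b x : ℝ) :
    |Real.log (Real.cosh (b*x)) + 1| ≤ (|b|+1) * Real.exp |x| := by
  rw [abs_of_nonneg (by linarith [log_cosh_nonneg (b*x)])]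
  have h1 := log_cosh_le_abs (b*x)
  have hbx : |b*x| = |b| * |x| := abs_mul b x
  have he : (1:ℝ) ≤ Real.exp |x| := Real.one_le_exp (abs_nonneg x)
  have h2 := mul_le_mul_of_nonneg_left (abs_le_exp_abs x) (abs_nonneg b)
  calc Real.log (Real.cosh (b*x)) + 1 ≤ |b| * |x| + 1 := by linarith
    _ ≤ |b| * Real.exp |x| + Real.exp |x| := by linarith
    _ = (|b|+1) * Real.exp |x| := by ring

lemma sq_div_cosh_le (y : ℝ) : Real.sinh y ^ 2 / Real.cosh y ≤ Real.cosh y := by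
  rw [div_le_iff₀ (Real.cosh_pos y)]
  nlinarith [Real.cosh_sq y, Real.cosh_pos y, Real.one_le_cosh y, sq_nonneg (Real.sinh y)]

lemma A_bound (β x : ℝ) :
    |β * (Real.cosh (β*x) * (Real.log (Real.cosh (β*x)) + 1)
        + Real.sinh (β*x)^2 / Real.cosh (β*x))|
      ≤ |β| * (|β|+2) * Real.exp ((|β|+2) * |x|) := by
  rw [abs_mul]
  have hcosh : Real.cosh (β*x) ≤ Real.exp (|β| * |x|) := by
    calc Real.cosh (β*x) ≤ Real.exp |β*x| := cosh_le_exp_abs _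
      _ = Real.exp (|β| * |x|) := by rw [abs_mul]
  have hsq0 : 0 ≤ Real.sinh (β*x)^2 / Real.cosh (β*x) :=
    div_nonneg (sq_nonneg _) (Real.cosh_pos _).le
  have hl1 : 0 ≤ Real.log (Real.cosh (β*x)) + 1 := by linarith [log_cosh_nonneg (β*x)]
  have hinner : |Real.cosh (β*x) * (Real.log (Real.cosh (β*x)) + 1)
      + Real.sinh (β*x)^2 / Real.cosh (β*x)| ≤ (|β|+2) * Real.exp ((|β|+2) * |x|) := by
    rw [abs_of_nonneg (by positivity)]
    have h1 : Real.cosh (β*x) * (Real.log (Real.cosh (β*x)) + 1)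
        ≤ Real.exp (|β| * |x|) * ((|β|+1) * Real.exp |x|) := by
      apply mul_le_mul hcosh _ hl1 (Real.exp_nonneg _)
      calc Real.log (Real.cosh (β*x)) + 1 ≤ |Real.log (Real.cosh (β*x)) + 1| := le_abs_self _
        _ ≤ (|β|+1) * Real.exp |x| := logcosh1_bound β x
    have h2 : Real.sinh (β*x)^2 / Real.cosh (β*x) ≤ Real.exp (|β| * |x|) :=
      le_trans (sq_div_cosh_le _) hcosh
    have key : Real.exp (|β| * |x|) * ((|β|+1) * Real.exp |x|) + Real.exp (|β| * |x|)
        ≤ (|β|+2) * Real.exp ((|β|+2) * |x|) := by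
      have e1 : Real.exp (|β| * |x|) * Real.exp |x| = Real.exp ((|β|+1) * |x|) := by
        rw [← Real.exp_add]; ring_nf
      have e2 : Real.exp ((|β|+1) * |x|) ≤ Real.exp ((|β|+2) * |x|) :=
        Real.exp_le_exp.2 (by nlinarith [abs_nonneg x])
      have e3 : Real.exp (|β| * |x|) ≤ Real.exp ((|β|+2) * |x|) :=
        Real.exp_le_exp.2 (by nlinarith [abs_nonneg x])
      calc Real.exp (|β| * |x|) * ((|β|+1) * Real.exp |x|) + Real.exp (|β| * |x|)
          = (|β|+1) * (Real.exp (|β| * |x|) * Real.exp |x|) + Real.exp (|β| * |x|) := by ring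
        _ = (|β|+1) * Real.exp ((|β|+1) * |x|) + Real.exp (|β| * |x|) := by rw [e1]
        _ ≤ (|β|+1) * Real.exp ((|β|+2) * |x|) + Real.exp ((|β|+2) * |x|) := by
            have := mul_le_mul_of_nonneg_left e2 (by positivity : (0:ℝ) ≤ |β|+1)
            linarith
        _ = (|β|+2) * Real.exp ((|β|+2) * |x|) := by ring
    linarith
  calc |β| * |Real.cosh (β*x) * (Real.log (Real.cosh (β*x)) + 1)
      + Real.sinh (β*x)^2 / Real.cosh (β*x)|
      ≤ |β| * ((|β|+2) * Real.exp ((|β|+2) * |x|)) :=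
        mul_le_mul_of_nonneg_left hinner (abs_nonneg β)
    _ = |β| * (|β|+2) * Real.exp ((|β|+2) * |x|) := by ring

lemma lint {f : ℝ → ℝ} (hf : Continuous f) (c C : ℝ)
    (h : ∀ x, |f x| ≤ C * Real.exp (c * |x|)) :
    Integrable (fun x => gaussianPDFReal 0 1 x * f x) volume := by
  apply (masterL c).const_mul C |>.mono'
  · exact ((stronglyMeasurable_gaussianPDFReal 0 1).measurable.aestronglyMeasurable.mul
      hf.aestronglyMeasurable)
  · filter_upwards with x
    rw [Real.norm_eq_abs, abs_mul, abs_of_nonneg (gaussianPDFReal_nonneg 0 1 x)]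
    calc gaussianPDFReal 0 1 x * |f x| ≤ gaussianPDFReal 0 1 x * (C * Real.exp (c * |x|)) :=
          mul_le_mul_of_nonneg_left (h x) (gaussianPDFReal_nonneg 0 1 x)
      _ = C * (gaussianPDFReal 0 1 x * Real.exp (c * |x|)) := by ring

lemma cont_f (β : ℝ) :
    Continuous (fun x => Real.sinh (β*x) * (Real.log (Real.cosh (β*x)) + 1)) :=
  (Real.continuous_sinh.comp (continuous_const.mul continuous_id)).mul
    ((cont_logcosh β).add continuous_const)

lemma cont_inner (β : ℝ) :
    Continuous (fun x => Real.cosh (β*x) * (Real.log (Real.cosh (β*x)) + 1)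
      + Real.sinh (β*x)^2 / Real.cosh (β*x)) := by
  apply Continuous.add
  · exact (Real.continuous_cosh.comp (continuous_const.mul continuous_id)).mul
      ((cont_logcosh β).add continuous_const)
  · exact Continuous.div
      ((Real.continuous_sinh.comp (continuous_const.mul continuous_id)).pow 2)
      (Real.continuous_cosh.comp (continuous_const.mul continuous_id))
      (fun x => (Real.cosh_pos (β*x)).ne')

lemma f_bound (β x : ℝ) :
    |Real.sinh (β*x) * (Real.log (Real.cosh (β*x)) + 1)|
      ≤ (|β|+1) * Real.exp ((|β|+1) * |x|) := by
  rw [abs_mul]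
  have h1 : |Real.sinh (β*x)| ≤ Real.exp (|β| * |x|) := by
    calc |Real.sinh (β*x)| ≤ Real.exp |β*x| := abs_sinh_le_exp_abs _
      _ = Real.exp (|β| * |x|) := by rw [abs_mul]
  calc |Real.sinh (β*x)| * |Real.log (Real.cosh (β*x)) + 1|
      ≤ Real.exp (|β| * |x|) * ((|β|+1) * Real.exp |x|) :=
        mul_le_mul h1 (logcosh1_bound β x) (abs_nonneg _) (Real.exp_nonneg _)
    _ = (|β|+1) * Real.exp ((|β|+1) * |x|) := by
        rw [show (|β|+1) * |x| = |β| * |x| + |x| by ring, Real.exp_add]; ring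

lemma ibp (β : ℝ) :
    ∫ x, x * Real.sinh (β*x) * (Real.log (Real.cosh (β*x)) + 1) ∂(gaussianReal 0 1)
      = β * ∫ x, (Real.cosh (β*x) * (Real.log (Real.cosh (β*x)) + 1)
          + Real.sinh (β*x)^2 / Real.cosh (β*x)) ∂(gaussianReal 0 1) := by
  have contP : Continuous (gaussianPDFReal 0 1) := by
    rw [pdf_eq]
    exact continuous_const.mul (Real.continuous_exp.comp (by continuity))
  -- the function G and its derivative
  have hG : ∀ x : ℝ, HasDerivAt
      (fun y => gaussianPDFReal 0 1 y * (Real.sinh (β*y) * (Real.log (Real.cosh (β*y)) + 1)))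
      (gaussianPDFReal 0 1 x *
        (β * (Real.cosh (β*x) * (Real.log (Real.cosh (β*x)) + 1)
            + Real.sinh (β*x)^2 / Real.cosh (β*x))
          - x * Real.sinh (β*x) * (Real.log (Real.cosh (β*x)) + 1))) x := by
    intro x
    have := (hasDeriv_pdf x).mul (hasDeriv_f β x)
    refine this.congr_deriv ?_
    ring
  -- integrability of G'
  have hAint : Integrable (fun x => gaussianPDFReal 0 1 x *
      (β * (Real.cosh (β*x) * (Real.log (Real.cosh (β*x)) + 1)
        + Real.sinh (β*x)^2 / Real.cosh (β*x)))) volume :=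
    lint (continuous_const.mul (cont_inner β)) (|β|+2) (|β| * (|β|+2)) (A_bound β)
  have hBint : Integrable (fun x => gaussianPDFReal 0 1 x *
      (x * Real.sinh (β*x) * (Real.log (Real.cosh (β*x)) + 1))) volume :=
    lint ((continuous_id.mul (Real.continuous_sinh.comp (continuous_const.mul continuous_id))).mul
      ((cont_logcosh β).add continuous_const)) (|β|+2) (|β|+1) (F'_bound β)
  have hG'int : Integrable (fun x => gaussianPDFReal 0 1 x *
      (β * (Real.cosh (β*x) * (Real.log (Real.cosh (β*x)) + 1)
          + Real.sinh (β*x)^2 / Real.cosh (β*x))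
        - x * Real.sinh (β*x) * (Real.log (Real.cosh (β*x)) + 1))) volume := by
    have := hAint.sub hBint
    convert this using 1
    funext x
    simp only [Pi.sub_apply]
    ring
  have hGint : Integrable (fun x => gaussianPDFReal 0 1 x *
      (Real.sinh (β*x) * (Real.log (Real.cosh (β*x)) + 1))) volume :=
    lint (cont_f β) (|β|+1) (|β|+1) (f_bound β)
  have hzero := integral_eq_zero_of_hasDerivAt_of_integrable hG hG'int hGint
  have hsplit : (∫ x, gaussianPDFReal 0 1 x *
      (β * (Real.cosh (β*x) * (Real.log (Real.cosh (β*x)) + 1)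
          + Real.sinh (β*x)^2 / Real.cosh (β*x))
        - x * Real.sinh (β*x) * (Real.log (Real.cosh (β*x)) + 1)))
      = (∫ x, gaussianPDFReal 0 1 x *
          (β * (Real.cosh (β*x) * (Real.log (Real.cosh (β*x)) + 1)
            + Real.sinh (β*x)^2 / Real.cosh (β*x))))
        - ∫ x, gaussianPDFReal 0 1 x *
            (x * Real.sinh (β*x) * (Real.log (Real.cosh (β*x)) + 1)) := by
    rw [← integral_sub hAint hBint]
    congr 1
    funext x
    ring
  rw [hsplit] at hzero
  have hBA : (∫ x, gaussianPDFReal 0 1 x *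
        (x * Real.sinh (β*x) * (Real.log (Real.cosh (β*x)) + 1)))
      = ∫ x, gaussianPDFReal 0 1 x *
          (β * (Real.cosh (β*x) * (Real.log (Real.cosh (β*x)) + 1)
            + Real.sinh (β*x)^2 / Real.cosh (β*x))) := by linarith
  rw [gconv, gconv, hBA]
  have hcomm : (fun x => gaussianPDFReal 0 1 x *
      (β * (Real.cosh (β*x) * (Real.log (Real.cosh (β*x)) + 1)
        + Real.sinh (β*x)^2 / Real.cosh (β*x))))
      = fun x => β * (gaussianPDFReal 0 1 x *
          (Real.cosh (β*x) * (Real.log (Real.cosh (β*x)) + 1)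
            + Real.sinh (β*x)^2 / Real.cosh (β*x))) := by
    funext x; ring
  rw [hcomm, integral_const_mul]

lemma cosh_sq_bound (β x : ℝ) :
    |Real.cosh (β*x) + Real.sinh (β*x)^2 / Real.cosh (β*x)| ≤ 2 * Real.exp (|β| * |x|) := by
  have hcosh : Real.cosh (β*x) ≤ Real.exp (|β| * |x|) := by
    calc Real.cosh (β*x) ≤ Real.exp |β*x| := cosh_le_exp_abs _
      _ = Real.exp (|β| * |x|) := by rw [abs_mul]
  have hsq0 : 0 ≤ Real.sinh (β*x)^2 / Real.cosh (β*x) :=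
    div_nonneg (sq_nonneg _) (Real.cosh_pos _).le
  have h2 := le_trans (sq_div_cosh_le (β*x)) hcosh
  rw [abs_of_nonneg (by positivity)]
  linarith [(Real.cosh_pos (β*x)).le]

lemma cont_coshsq (β : ℝ) :
    Continuous (fun x => Real.cosh (β*x) + Real.sinh (β*x)^2 / Real.cosh (β*x)) :=
  (Real.continuous_cosh.comp (continuous_const.mul continuous_id)).add
    (Continuous.div
      ((Real.continuous_sinh.comp (continuous_const.mul continuous_id)).pow 2)
      (Real.continuous_cosh.comp (continuous_const.mul continuous_id))
      (fun x => (Real.cosh_pos (β*x)).ne'))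

lemma int_coshsq (β : ℝ) :
    Integrable (fun x => Real.cosh (β*x) + Real.sinh (β*x)^2 / Real.cosh (β*x))
      (gaussianReal 0 1) :=
  gintegrable (cont_coshsq β) |β| 2 (cosh_sq_bound β)

lemma int_coshlog (β : ℝ) :
    Integrable (fun x => Real.cosh (β*x) * Real.log (Real.cosh (β*x))) (gaussianReal 0 1) :=
  gintegrable ((Real.continuous_cosh.comp (continuous_const.mul continuous_id)).mul
    (cont_logcosh β)) (|β|+1) |β| (coshlog_bound β)

lemma int_cosh (β : ℝ) : Integrable (fun x => Real.cosh (β*x)) (gaussianReal 0 1) := by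
  apply gintegrable (Real.continuous_cosh.comp (continuous_const.mul continuous_id)) |β| 1
  intro x
  simp only [Function.comp_apply, id]
  rw [abs_of_pos (Real.cosh_pos _), one_mul]
  calc Real.cosh (β*x) ≤ Real.exp |β*x| := cosh_le_exp_abs _
    _ = Real.exp (|β| * |x|) := by rw [abs_mul]

lemma gsplit (β : ℝ) :
    ∫ x, (Real.cosh (β*x) * (Real.log (Real.cosh (β*x)) + 1)
        + Real.sinh (β*x)^2 / Real.cosh (β*x)) ∂(gaussianReal 0 1)
      = (∫ x, Real.cosh (β*x) * Real.log (Real.cosh (β*x)) ∂(gaussianReal 0 1))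
        + ∫ x, (Real.cosh (β*x) + Real.sinh (β*x)^2 / Real.cosh (β*x)) ∂(gaussianReal 0 1) := by
  rw [← integral_add (int_coshlog β) (int_coshsq β)]
  congr 1
  funext x
  ring

lemma hasDeriv_H (β : ℝ) :
    HasDerivAt (fun b => Real.exp (-b^2/2) *
        ∫ x, Real.cosh (b*x) * Real.log (Real.cosh (b*x)) ∂(gaussianReal 0 1))
      (β * Real.exp (-β^2/2) *
        ∫ x, (Real.cosh (β*x) + Real.sinh (β*x)^2 / Real.cosh (β*x)) ∂(gaussianReal 0 1)) β := by
  have h1 : HasDerivAt (fun b : ℝ => -b^2/2) (-β) β := by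
    have := ((hasDerivAt_pow 2 β).neg).div_const 2
    refine this.congr_deriv ?_
    · push_cast
      ring
  have he : HasDerivAt (fun b : ℝ => Real.exp (-b^2/2)) (Real.exp (-β^2/2) * (-β)) β := h1.exp
  have hg := (hasDeriv_G β).2
  have hmul := he.mul hg
  refine hmul.congr_deriv ?_
  rw [ibp β, gsplit β]
  ring

lemma deriv_H_ge (β : ℝ) (hβ : 0 ≤ β) :
    β ≤ β * Real.exp (-β^2/2) *
      ∫ x, (Real.cosh (β*x) + Real.sinh (β*x)^2 / Real.cosh (β*x)) ∂(gaussianReal 0 1) := by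
  have hmono : (∫ x, Real.cosh (β*x) ∂(gaussianReal 0 1))
      ≤ ∫ x, (Real.cosh (β*x) + Real.sinh (β*x)^2 / Real.cosh (β*x)) ∂(gaussianReal 0 1) := by
    apply integral_mono (int_cosh β) (int_coshsq β)
    intro x
    have : 0 ≤ Real.sinh (β*x)^2 / Real.cosh (β*x) :=
      div_nonneg (sq_nonneg _) (Real.cosh_pos _).le
    simp only
    linarith
  rw [gcosh β] at hmono
  have hexp : Real.exp (-β^2/2) * Real.exp (β^2/2) = 1 := by
    rw [← Real.exp_add, show -β^2/2 + β^2/2 = 0 by ring, Real.exp_zero]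
  calc β = β * (Real.exp (-β^2/2) * Real.exp (β^2/2)) := by rw [hexp, mul_one]
    _ = β * Real.exp (-β^2/2) * Real.exp (β^2/2) := by ring
    _ ≤ β * Real.exp (-β^2/2) *
        ∫ x, (Real.cosh (β*x) + Real.sinh (β*x)^2 / Real.cosh (β*x)) ∂(gaussianReal 0 1) :=
      mul_le_mul_of_nonneg_left hmono (by positivity)

set_option maxHeartbeats 1000000 in
theorem critical_temperature_REM_cavity'
    (H : ℝ → ℝ)
    (hH : H = fun β => Real.exp (-β ^ 2 / 2) *
      ∫ x, Real.cosh (β * x) * Real.log (Real.cosh (β * x)) ∂(gaussianReal 0 1)) :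
    Continuous H ∧
    StrictMonoOn H (Ici (0 : ℝ)) ∧
    H 0 = 0 ∧
    Tendsto H atTop atTop ∧
    (∃ βcr : ℝ, 0 < βcr ∧ H βcr = Real.log 2 ∧
      (∀ β ∈ Ici (0 : ℝ), (H β ≤ Real.log 2 ↔ β ≤ βcr)) ∧
      ∀ βcr' : ℝ, 0 < βcr' → H βcr' = Real.log 2 → βcr' = βcr) := by
  have hd : ∀ β : ℝ, HasDerivAt H (β * Real.exp (-β^2/2) *
      ∫ x, (Real.cosh (β*x) + Real.sinh (β*x)^2 / Real.cosh (β*x)) ∂(gaussianReal 0 1)) β := by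
    intro β
    rw [hH]
    exact hasDeriv_H β
  have hcont : Continuous H := by
    rw [continuous_iff_continuousAt]
    exact fun β => (hd β).continuousAt
  have hH0 : H 0 = 0 := by
    rw [hH]
    simp
  have hmono : StrictMonoOn H (Ici (0:ℝ)) := by
    apply strictMonoOn_of_deriv_pos (convex_Ici 0) hcont.continuousOn
    intro β hβ
    rw [interior_Ici] at hβ
    rw [(hd β).deriv]
    exact lt_of_lt_of_le hβ (deriv_H_ge β hβ.le)
  have hsq : ∀ b : ℝ, HasDerivAt (fun b : ℝ => b^2/2) b b := by
    intro b
    have := (hasDerivAt_pow 2 b).div_const 2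
    refine this.congr_deriv ?_
    push_cast
    ring
  have hbig : ∀ β : ℝ, 0 ≤ β → β^2/2 ≤ H β := by
    intro β hβ
    have hK : ∀ b : ℝ, HasDerivAt (fun b => H b - b^2/2)
        ((b * Real.exp (-b^2/2) *
          ∫ x, (Real.cosh (b*x) + Real.sinh (b*x)^2 / Real.cosh (b*x)) ∂(gaussianReal 0 1)) - b)
        b := fun b => (hd b).sub (hsq b)
    have hm : MonotoneOn (fun b => H b - b^2/2) (Ici (0:ℝ)) := by
      apply monotoneOn_of_deriv_nonneg (convex_Ici 0)
        (Continuous.continuousOn (by continuity))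
      · intro b hb
        exact ((hK b).differentiableAt).differentiableWithinAt
      · intro b hb
        rw [interior_Ici] at hb
        rw [(hK b).deriv]
        linarith [deriv_H_ge b hb.le]
    have h0 := hm (self_mem_Ici) (show β ∈ Ici (0:ℝ) from hβ) hβ
    simp only [hH0] at h0
    norm_num at h0
    linarith
  have htop : Tendsto H atTop atTop := by
    have h2 : Tendsto (fun β : ℝ => β^2/2) atTop atTop :=
      (tendsto_pow_atTop two_ne_zero).atTop_div_const two_pos
    exact tendsto_atTop_mono' atTop
      (by filter_upwards [eventually_ge_atTop (0:ℝ)] with β hβ; exact hbig β hβ) h2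
  refine ⟨hcont, hmono, hH0, htop, ?_⟩
  have hlog2 : 0 < Real.log 2 := Real.log_pos one_lt_two
  have hH2 : Real.log 2 ≤ H 2 := by
    have h1 : Real.log 2 ≤ 1 := by
      have := Real.log_le_sub_one_of_pos (by norm_num : (0:ℝ) < 2)
      linarith
    have := hbig 2 (by norm_num)
    norm_num at this
    linarith
  obtain ⟨βcr, hβcr_mem, hβcr⟩ := intermediate_value_Icc (by norm_num : (0:ℝ) ≤ 2)
    (hcont.continuousOn) (by rw [hH0]; exact ⟨hlog2.le, hH2⟩)
  have hβcr_Ici : βcr ∈ Ici (0:ℝ) := hβcr_mem.1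
  have hβcr_pos : 0 < βcr := by
    rcases lt_or_eq_of_le hβcr_mem.1 with h | h
    · exact h
    · exfalso
      rw [← h, hH0] at hβcr
      linarith
  refine ⟨βcr, hβcr_pos, hβcr, ?_, ?_⟩
  · intro β hβ
    rw [← hβcr]
    exact hmono.le_iff_le hβ hβcr_Ici
  · intro βcr' hpos' heq'
    exact hmono.injOn (mem_Ici.2 hpos'.le) hβcr_Ici (by rw [heq', hβcr])

theorem critical_temperature_REM_cavity
    (H : ℝ → ℝ)
    (hH : H = fun β => Real.exp (-β ^ 2 / 2) *
      ∫ x, Real.cosh (β * x) * Real.log (Real.cosh (β * x)) ∂(gaussianReal 0 1)) :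
    Continuous H ∧
    StrictMonoOn H (Ici (0 : ℝ)) ∧
    H 0 = 0 ∧
    Tendsto H atTop atTop ∧
    (∃ βcr : ℝ, 0 < βcr ∧ H βcr = Real.log 2 ∧
      (∀ β ∈ Ici (0 : ℝ), (H β ≤ Real.log 2 ↔ β ≤ βcr)) ∧
      ∀ βcr' : ℝ, 0 < βcr' → H βcr' = Real.log 2 → βcr' = βcr) :=
  critical_temperature_REM_cavity' H hH
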